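/- arXiv:1411.5659 — 2 statements merged into one kernel-verified Lean document; each statement's English description precedes it below -/
import Mathlib

section
/- There exists a constant C > 0 such that for every t ∈ ℝ, every j ∈ ℤ, and every sequence φ ∈ ℓ¹(ℤ; ℂ), the discrete Schrödinger evolution u(t,j) := Σ_{k∈ℤ} K_t(j-k) φ(k) satisfies sup_{j∈ℤ} |u(t,j)| ≤ C (1+|t|)^{-1/3} Σ_{k∈ℤ} |φ(k)|. -/
open Real MeasureTheory intervalIntegral

lemma vdc1 {f f' f'' : ℝ → ℝ} {a b μ : ℝ} (hab : a ≤ b) (hμ : 0 < μ)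
    (hd1 : ∀ x ∈ Set.Icc a b, HasDerivAt f (f' x) x)
    (hd2 : ∀ x ∈ Set.Icc a b, HasDerivAt f' (f'' x) x)
    (hc2 : ContinuousOn f'' (Set.Icc a b))
    (h2 : ∀ x ∈ Set.Icc a b, 0 ≤ f'' x)
    (h1 : ∀ x ∈ Set.Icc a b, μ ≤ f' x) :
    ‖∫ x in a..b, Complex.exp (Complex.I * f x)‖ ≤ 4 / μ := by
  have huIcc : Set.uIcc a b = Set.Icc a b := Set.uIcc_of_le hab
  have hfne : ∀ x ∈ Set.Icc a b, f' x ≠ 0 := fun x hx => ne_of_gt (lt_of_lt_of_le hμ (h1 x hx))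
  have hf'cont : ContinuousOn f' (Set.Icc a b) := fun x hx => ((hd2 x hx).continuousAt).continuousWithinAt
  have hf1cont : ContinuousOn f (Set.Icc a b) := fun x hx => ((hd1 x hx).continuousAt).continuousWithinAt
  set u : ℝ → ℂ := fun x => -Complex.I * (((f' x)⁻¹ : ℝ) : ℂ) with hu_def
  set u' : ℝ → ℂ := fun x => -Complex.I * ((-(f'' x) / (f' x) ^ 2 : ℝ) : ℂ) with hu'_def
  set v : ℝ → ℂ := fun x => Complex.exp (Complex.I * (f x : ℂ)) with hv_def
  set v' : ℝ → ℂ := fun x => Complex.I * (f' x : ℂ) * Complex.exp (Complex.I * (f x : ℂ)) with hv'_def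
  have hIne : ∀ x ∈ Set.Icc a b, Complex.I * (f' x : ℂ) ≠ 0 := by
    intro x hx
    simp [Complex.I_ne_zero, Complex.ofReal_eq_zero, hfne x hx]
  have hu : ∀ x ∈ Set.uIcc a b, HasDerivAt u (u' x) x := by
    rw [huIcc]
    intro x hx
    have h3 : HasDerivAt (fun y => (f' y)⁻¹) (-(f'' x) / (f' x) ^ 2) x :=
      HasDerivAt.inv (hd2 x hx) (hfne x hx)
    exact (h3.ofReal_comp).const_mul (-Complex.I)
  have hv : ∀ x ∈ Set.uIcc a b, HasDerivAt v (v' x) x := by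
    rw [huIcc]
    intro x hx
    have h1 : HasDerivAt (fun y => Complex.I * (f y : ℂ)) (Complex.I * (f' x : ℂ)) x :=
      (((hd1 x hx).ofReal_comp).const_mul Complex.I)
    simpa [hv'_def, mul_comm] using h1.cexp
  have hu'int : IntervalIntegrable u' volume a b := by
    apply ContinuousOn.intervalIntegrable
    rw [huIcc]
    exact continuousOn_const.mul (Complex.continuous_ofReal.comp_continuousOn
      (hc2.neg.div (hf'cont.pow 2) (fun x hx => pow_ne_zero 2 (hfne x hx))))
  have hv'int : IntervalIntegrable v' volume a b := by
    apply ContinuousOn.intervalIntegrable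
    rw [huIcc]
    apply ContinuousOn.mul
    · exact continuousOn_const.mul (Complex.continuous_ofReal.comp_continuousOn hf'cont)
    · exact (continuousOn_const.mul (Complex.continuous_ofReal.comp_continuousOn hf1cont)).cexp
  have hparts := integral_mul_deriv_eq_deriv_mul hu hv hu'int hv'int
  have hmain : (∫ x in a..b, Complex.exp (Complex.I * (f x : ℂ)))
      = u b * v b - u a * v a - ∫ x in a..b, u' x * v x := by
    rw [← hparts]
    apply integral_congr
    intro x hx
    rw [huIcc] at hx
    simp only [u, v', hv_def]
    push_cast
    rw [show -Complex.I * ((f' x : ℂ))⁻¹ * (Complex.I * (f' x : ℂ) * Complex.exp (Complex.I * (f x : ℂ)))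
      = (Complex.I * -Complex.I) * (((f' x : ℂ))⁻¹ * (f' x : ℂ)) * Complex.exp (Complex.I * (f x : ℂ)) by ring]
    rw [inv_mul_cancel₀ (by exact_mod_cast hfne x hx)]
    simp [mul_neg, Complex.I_mul_I]
  have habmem : a ∈ Set.Icc a b := Set.left_mem_Icc.2 hab
  have hbbmem : b ∈ Set.Icc a b := Set.right_mem_Icc.2 hab
  have hvnorm : ∀ x : ℝ, ‖v x‖ = 1 := by
    intro x
    simp only [hv_def]
    rw [mul_comm]
    exact Complex.norm_exp_ofReal_mul_I (f x)
  have hunorm : ∀ x ∈ Set.Icc a b, ‖u x‖ = (f' x)⁻¹ := by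
    intro x hx
    simp only [hu_def]
    rw [norm_mul]
    have hpos : 0 < f' x := lt_of_lt_of_le hμ (h1 x hx)
    simp [abs_of_nonneg (inv_nonneg.2 hpos.le), hpos.le]
  have hg' : ∀ x ∈ Set.uIcc a b, HasDerivAt (fun y => -(f' y)⁻¹) (f'' x / (f' x) ^ 2) x := by
    rw [huIcc]
    intro x hx
    have h3 : HasDerivAt (fun y => (f' y)⁻¹) (-(f'' x) / (f' x) ^ 2) x :=
      HasDerivAt.inv (hd2 x hx) (hfne x hx)
    exact h3.neg.congr_deriv (by ring)
  have hgint : IntervalIntegrable (fun x => f'' x / (f' x) ^ 2) volume a b := by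
    apply ContinuousOn.intervalIntegrable
    rw [huIcc]
    exact hc2.div (hf'cont.pow 2) (fun x hx => pow_ne_zero 2 (hfne x hx))
  have hFTC : (∫ x in a..b, f'' x / (f' x) ^ 2) = (f' a)⁻¹ - (f' b)⁻¹ := by
    rw [integral_eq_sub_of_hasDerivAt hg' hgint]
    ring
  have h5 : ‖∫ x in a..b, u' x * v x‖ ≤ (f' a)⁻¹ - (f' b)⁻¹ := by
    calc ‖∫ x in a..b, u' x * v x‖ ≤ ∫ x in a..b, ‖u' x * v x‖ :=
          intervalIntegral.norm_integral_le_integral_norm hab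
      _ = ∫ x in a..b, f'' x / (f' x) ^ 2 := by
          apply integral_congr
          intro x hx
          rw [huIcc] at hx
          show ‖u' x * v x‖ = f'' x / f' x ^ 2
          rw [norm_mul, hvnorm x, mul_one]
          simp only [hu'_def]
          rw [norm_mul]
          simp [abs_of_nonneg (h2 x hx), abs_of_nonneg (sq_nonneg (f' x)), abs_div]
      _ = (f' a)⁻¹ - (f' b)⁻¹ := hFTC
  have hμa : (f' a)⁻¹ ≤ μ⁻¹ := inv_anti₀ hμ (h1 a habmem)
  have hμb : (0:ℝ) ≤ (f' b)⁻¹ := inv_nonneg.2 (le_of_lt (lt_of_lt_of_le hμ (h1 b hbbmem)))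
  have hμa' : (f' a)⁻¹ ≤ μ⁻¹ := hμa
  rw [hmain]
  have hub : ‖u b * v b‖ ≤ μ⁻¹ := by
    rw [norm_mul, hvnorm b, mul_one, hunorm b hbbmem]
    exact inv_anti₀ hμ (h1 b hbbmem)
  have hua : ‖u a * v a‖ ≤ μ⁻¹ := by
    rw [norm_mul, hvnorm a, mul_one, hunorm a habmem]
    exact hμa
  calc ‖u b * v b - u a * v a - ∫ x in a..b, u' x * v x‖
      ≤ ‖u b * v b - u a * v a‖ + ‖∫ x in a..b, u' x * v x‖ := norm_sub_le _ _
    _ ≤ (‖u b * v b‖ + ‖u a * v a‖) + ((f' a)⁻¹ - (f' b)⁻¹) :=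
        add_le_add (norm_sub_le _ _) h5
    _ ≤ (μ⁻¹ + μ⁻¹) + (μ⁻¹ - 0) := by
        apply add_le_add (add_le_add hub hua)
        exact sub_le_sub hμa' hμb
    _ ≤ 4 / μ := by
        rw [div_eq_mul_inv]
        have : (0:ℝ) ≤ μ⁻¹ := inv_nonneg.2 hμ.le
        linarith

lemma expIf_integrable {f : ℝ → ℝ} {a b : ℝ} (hc : ContinuousOn f (Set.uIcc a b)) :
    IntervalIntegrable (fun x => Complex.exp (Complex.I * (f x : ℂ))) volume a b := by
  apply ContinuousOn.intervalIntegrable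
  exact (continuousOn_const.mul (Complex.continuous_ofReal.comp_continuousOn hc)).cexp

lemma norm_expIf_integral_le {f : ℝ → ℝ} {a b : ℝ} (hab : a ≤ b) :
    ‖∫ x in a..b, Complex.exp (Complex.I * (f x : ℂ))‖ ≤ b - a := by
  have h := intervalIntegral.norm_integral_le_of_norm_le_const
    (C := 1) (f := fun x => Complex.exp (Complex.I * (f x : ℂ))) (a := a) (b := b) ?_
  · calc ‖∫ x in a..b, Complex.exp (Complex.I * (f x : ℂ))‖ ≤ 1 * |b - a| := h
      _ = b - a := by rw [one_mul, abs_of_nonneg (sub_nonneg.2 hab)]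
  · intro x hx
    show ‖Complex.exp (Complex.I * (f x : ℂ))‖ ≤ 1
    rw [mul_comm]
    exact le_of_eq (Complex.norm_exp_ofReal_mul_I (f x))

lemma vdc2a {f f' f'' : ℝ → ℝ} {a b lb : ℝ} (hab : a ≤ b) (hlb : 0 < lb)
    (hd1 : ∀ x ∈ Set.Icc a b, HasDerivAt f (f' x) x)
    (hd2 : ∀ x ∈ Set.Icc a b, HasDerivAt f' (f'' x) x)
    (hc2 : ContinuousOn f'' (Set.Icc a b))
    (h2 : ∀ x ∈ Set.Icc a b, lb ≤ f'' x)
    (ha : 0 ≤ f' a) :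
    ‖∫ x in a..b, Complex.exp (Complex.I * f x)‖ ≤ 4 / Real.sqrt lb := by
  have hs : 0 < Real.sqrt lb := Real.sqrt_pos.2 hlb
  set δ : ℝ := 2 / Real.sqrt lb with hδ
  have hδpos : 0 < δ := by positivity
  have hf'cont : ContinuousOn f' (Set.Icc a b) := fun x hx => ((hd2 x hx).continuousAt).continuousWithinAt
  -- monotonicity: f' x - f' a ≥ lb * (x - a)
  have hmono : ∀ x ∈ Set.Icc a b, f' a + lb * (x - a) ≤ f' x := by
    intro x hx
    have hmonoOn : MonotoneOn (fun y => f' y - lb * y) (Set.Icc a b) := by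
      have hder : ∀ y ∈ Set.Ioo a b, HasDerivAt (fun y => f' y - lb * y) (f'' y - lb) y := by
        intro y hy
        have := (hd2 y (Set.mem_Icc_of_Ioo hy)).sub ((hasDerivAt_id y).const_mul lb)
        exact this.congr_deriv (by ring)
      apply monotoneOn_of_deriv_nonneg (convex_Icc a b)
      · exact hf'cont.sub ((continuous_const.mul continuous_id).continuousOn)
      · intro y hy
        rw [interior_Icc] at hy
        exact (hder y hy).differentiableAt.differentiableWithinAt
      · intro y hy
        rw [interior_Icc] at hy
        rw [(hder y hy).deriv]
        have := h2 y (Set.mem_Icc_of_Ioo hy)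
        linarith
    have := hmonoOn (Set.left_mem_Icc.2 hab) hx hx.1
    simp only at this
    linarith
  by_cases hsplit : b ≤ a + δ
  · calc ‖∫ x in a..b, Complex.exp (Complex.I * f x)‖ ≤ b - a := norm_expIf_integral_le hab
      _ ≤ δ := by linarith
      _ ≤ 4 / Real.sqrt lb := by rw [hδ]; rw [div_le_div_iff₀ hs hs]; nlinarith
  · push_neg at hsplit
    have hc : a + δ ∈ Set.Icc a b := ⟨by linarith, hsplit.le⟩
    have hint1 : IntervalIntegrable (fun x => Complex.exp (Complex.I * (f x : ℂ))) volume a (a + δ) := by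
      apply expIf_integrable
      apply ContinuousOn.mono (s := Set.Icc a b)
      · exact fun x hx => ((hd1 x hx).continuousAt).continuousWithinAt
      · rw [Set.uIcc_of_le (by linarith : a ≤ a + δ)]
        exact Set.Icc_subset_Icc le_rfl hsplit.le
    have hint2 : IntervalIntegrable (fun x => Complex.exp (Complex.I * (f x : ℂ))) volume (a + δ) b := by
      apply expIf_integrable
      apply ContinuousOn.mono (s := Set.Icc a b)
      · exact fun x hx => ((hd1 x hx).continuousAt).continuousWithinAt
      · rw [Set.uIcc_of_le hsplit.le]
        exact Set.Icc_subset_Icc (by linarith) le_rfl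
    rw [← intervalIntegral.integral_add_adjacent_intervals hint1 hint2]
    have hsub : Set.Icc (a + δ) b ⊆ Set.Icc a b := Set.Icc_subset_Icc (by linarith) le_rfl
    have hb2 : ‖∫ x in (a+δ)..b, Complex.exp (Complex.I * (f x : ℂ))‖ ≤ 4 / (lb * δ) := by
      apply vdc1 hsplit.le (by positivity)
        (fun x hx => hd1 x (hsub hx)) (fun x hx => hd2 x (hsub hx)) (hc2.mono hsub)
        (fun x hx => le_trans hlb.le (h2 x (hsub hx)))
      intro x hx
      have h3 := hmono x (hsub hx)
      have h4 : a + δ ≤ x := hx.1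
      nlinarith
    have hb1 : ‖∫ x in a..(a+δ), Complex.exp (Complex.I * (f x : ℂ))‖ ≤ δ := by
      have := norm_expIf_integral_le (f := f) (by linarith : a ≤ a + δ)
      simpa using this
    have key : 4 / (lb * δ) = δ := by
      rw [hδ]
      rw [div_eq_iff (by positivity : lb * (2 / Real.sqrt lb) ≠ 0)]
      have : Real.sqrt lb * Real.sqrt lb = lb := Real.mul_self_sqrt hlb.le
      field_simp
      nlinarith
    calc ‖(∫ x in a..(a+δ), Complex.exp (Complex.I * (f x : ℂ))) + ∫ x in (a+δ)..b, Complex.exp (Complex.I * (f x : ℂ))‖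
        ≤ δ + 4 / (lb * δ) := le_trans (norm_add_le _ _) (add_le_add hb1 hb2)
      _ = δ + δ := by rw [key]
      _ = 4 / Real.sqrt lb := by rw [hδ]; ring

lemma vdc2b {f f' f'' : ℝ → ℝ} {a b lb : ℝ} (hab : a ≤ b) (hlb : 0 < lb)
    (hd1 : ∀ x ∈ Set.Icc a b, HasDerivAt f (f' x) x)
    (hd2 : ∀ x ∈ Set.Icc a b, HasDerivAt f' (f'' x) x)
    (hc2 : ContinuousOn f'' (Set.Icc a b))
    (h2 : ∀ x ∈ Set.Icc a b, lb ≤ f'' x)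
    (hb : f' b ≤ 0) :
    ‖∫ x in a..b, Complex.exp (Complex.I * f x)‖ ≤ 4 / Real.sqrt lb := by
  have hmem : ∀ x ∈ Set.Icc a b, a + b - x ∈ Set.Icc a b := by
    intro x hx
    exact ⟨by linarith [hx.2], by linarith [hx.1]⟩
  have hrefl : (∫ x in a..b, Complex.exp (Complex.I * f x))
      = ∫ x in a..b, Complex.exp (Complex.I * (f (a + b - x) : ℂ)) := by
    rw [intervalIntegral.integral_comp_sub_left (fun y => Complex.exp (Complex.I * (f y : ℂ))) (a + b)]
    norm_num
  rw [hrefl]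
  have hneg : ∀ x : ℝ, HasDerivAt (fun y => a + b - y) (-1 : ℝ) x := by
    intro x
    simpa using (hasDerivAt_id x).const_sub (a + b)
  have hd1' : ∀ x ∈ Set.Icc a b, HasDerivAt (fun y => f (a + b - y)) (-f' (a + b - x)) x := by
    intro x hx
    have := (hd1 _ (hmem x hx)).comp x (hneg x)
    exact this.congr_deriv (by ring)
  have hd2' : ∀ x ∈ Set.Icc a b, HasDerivAt (fun y => -f' (a + b - y)) (f'' (a + b - x)) x := by
    intro x hx
    have := ((hd2 _ (hmem x hx)).comp x (hneg x)).neg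
    exact this.congr_deriv (by ring)
  have hcont' : ContinuousOn (fun y => f'' (a + b - y)) (Set.Icc a b) :=
    hc2.comp ((continuous_const.sub continuous_id).continuousOn) hmem
  exact vdc2a hab hlb hd1' hd2' hcont' (fun x hx => h2 _ (hmem x hx)) (by simpa using neg_nonneg.2 hb)

lemma vdc2 {f f' f'' : ℝ → ℝ} {a b lb : ℝ} (hab : a ≤ b) (hlb : 0 < lb)
    (hd1 : ∀ x ∈ Set.Icc a b, HasDerivAt f (f' x) x)
    (hd2 : ∀ x ∈ Set.Icc a b, HasDerivAt f' (f'' x) x)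
    (hc2 : ContinuousOn f'' (Set.Icc a b))
    (h2 : ∀ x ∈ Set.Icc a b, lb ≤ f'' x) :
    ‖∫ x in a..b, Complex.exp (Complex.I * f x)‖ ≤ 8 / Real.sqrt lb := by
  have hs : 0 < Real.sqrt lb := Real.sqrt_pos.2 hlb
  have h48 : 4 / Real.sqrt lb ≤ 8 / Real.sqrt lb := by
    rw [div_le_div_iff₀ hs hs]; nlinarith
  by_cases ha : 0 ≤ f' a
  · exact le_trans (vdc2a hab hlb hd1 hd2 hc2 h2 ha) h48
  push_neg at ha
  by_cases hb : f' b ≤ 0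
  · exact le_trans (vdc2b hab hlb hd1 hd2 hc2 h2 hb) h48
  push_neg at hb
  have hf'cont : ContinuousOn f' (Set.Icc a b) := fun x hx => ((hd2 x hx).continuousAt).continuousWithinAt
  obtain ⟨c, hc, hfc⟩ : ∃ c ∈ Set.Icc a b, f' c = 0 := by
    have := intermediate_value_Icc hab hf'cont
    have h0 : (0:ℝ) ∈ Set.Icc (f' a) (f' b) := ⟨ha.le, hb.le⟩
    obtain ⟨c, hcmem, hfc⟩ := this h0
    exact ⟨c, hcmem, hfc⟩
  have hsub1 : Set.Icc a c ⊆ Set.Icc a b := Set.Icc_subset_Icc le_rfl hc.2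
  have hsub2 : Set.Icc c b ⊆ Set.Icc a b := Set.Icc_subset_Icc hc.1 le_rfl
  have hcontf : ContinuousOn f (Set.Icc a b) := fun x hx => ((hd1 x hx).continuousAt).continuousWithinAt
  have hint1 : IntervalIntegrable (fun x => Complex.exp (Complex.I * (f x : ℂ))) volume a c := by
    apply expIf_integrable
    rw [Set.uIcc_of_le hc.1]
    exact hcontf.mono hsub1
  have hint2 : IntervalIntegrable (fun x => Complex.exp (Complex.I * (f x : ℂ))) volume c b := by
    apply expIf_integrable
    rw [Set.uIcc_of_le hc.2]
    exact hcontf.mono hsub2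
  rw [← intervalIntegral.integral_add_adjacent_intervals hint1 hint2]
  have hleft : ‖∫ x in a..c, Complex.exp (Complex.I * (f x : ℂ))‖ ≤ 4 / Real.sqrt lb :=
    vdc2b hc.1 hlb (fun x hx => hd1 x (hsub1 hx)) (fun x hx => hd2 x (hsub1 hx))
      (hc2.mono hsub1) (fun x hx => h2 x (hsub1 hx)) (le_of_eq hfc)
  have hright : ‖∫ x in c..b, Complex.exp (Complex.I * (f x : ℂ))‖ ≤ 4 / Real.sqrt lb :=
    vdc2a hc.2 hlb (fun x hx => hd1 x (hsub2 hx)) (fun x hx => hd2 x (hsub2 hx))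
      (hc2.mono hsub2) (fun x hx => h2 x (hsub2 hx)) (ge_of_eq hfc)
  calc ‖(∫ x in a..c, Complex.exp (Complex.I * (f x : ℂ))) + ∫ x in c..b, Complex.exp (Complex.I * (f x : ℂ))‖
      ≤ 4 / Real.sqrt lb + 4 / Real.sqrt lb := le_trans (norm_add_le _ _) (add_le_add hleft hright)
    _ = 8 / Real.sqrt lb := by ring

lemma vdc2neg {f f' f'' : ℝ → ℝ} {a b lb : ℝ} (hab : a ≤ b) (hlb : 0 < lb)
    (hd1 : ∀ x ∈ Set.Icc a b, HasDerivAt f (f' x) x)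
    (hd2 : ∀ x ∈ Set.Icc a b, HasDerivAt f' (f'' x) x)
    (hc2 : ContinuousOn f'' (Set.Icc a b))
    (h2 : ∀ x ∈ Set.Icc a b, f'' x ≤ -lb) :
    ‖∫ x in a..b, Complex.exp (Complex.I * f x)‖ ≤ 8 / Real.sqrt lb := by
  have hic : ∀ c d : ℝ, (∫ x in c..d, (starRingEnd ℂ) (Complex.exp (Complex.I * (f x : ℂ))))
      = (starRingEnd ℂ) (∫ x in c..d, Complex.exp (Complex.I * (f x : ℂ))) := by
    intro c d
    rw [intervalIntegral.intervalIntegral_eq_integral_uIoc,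
      intervalIntegral.intervalIntegral_eq_integral_uIoc, integral_conj]
    rw [Complex.real_smul, Complex.real_smul, map_mul, Complex.conj_ofReal]
  have hconj : (∫ x in a..b, Complex.exp (Complex.I * ((-f) x : ℝ)))
      = (starRingEnd ℂ) (∫ x in a..b, Complex.exp (Complex.I * (f x : ℂ))) := by
    rw [← hic]
    apply intervalIntegral.integral_congr
    intro x hx
    show Complex.exp (Complex.I * ((-f) x : ℝ)) = (starRingEnd ℂ) (Complex.exp (Complex.I * (f x : ℂ)))
    rw [← Complex.exp_conj]
    congr 1
    simp [Pi.neg_apply]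
  have := vdc2 (f := -f) (f' := -f') (f'' := -f'') hab hlb
    (fun x hx => (hd1 x hx).neg) (fun x hx => (hd2 x hx).neg) hc2.neg
    (fun x hx => by simpa using neg_le_neg (h2 x hx))
  rw [hconj] at this
  simpa using this

lemma phase_hd1 (t : ℝ) (j : ℤ) (ξ : ℝ) :
    HasDerivAt (fun x => (j:ℝ) * x + 2*t*Real.cos x) ((j:ℝ) - 2*t*Real.sin ξ) ξ := by
  have h1 : HasDerivAt (fun x : ℝ => (j:ℝ) * x) (j:ℝ) ξ := by
    simpa using (hasDerivAt_id ξ).const_mul (j:ℝ)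
  have h2 : HasDerivAt (fun x => 2*t*Real.cos x) (2*t*(-Real.sin ξ)) ξ :=
    (Real.hasDerivAt_cos ξ).const_mul (2*t)
  have := h1.add h2
  exact this.congr_deriv (by ring)

lemma phase_hd2 (t : ℝ) (j : ℤ) (ξ : ℝ) :
    HasDerivAt (fun x => (j:ℝ) - 2*t*Real.sin x) (-(2*t*Real.cos ξ)) ξ := by
  have h2 : HasDerivAt (fun x => 2*t*Real.sin x) (2*t*Real.cos ξ) ξ :=
    (Real.hasDerivAt_sin ξ).const_mul (2*t)
  simpa using (h2.const_sub (j:ℝ))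

lemma J_bound {t : ℝ} (ht : 1 ≤ t) (j : ℤ) :
    ‖∫ ξ in (-Real.pi)..Real.pi,
        Complex.exp (Complex.I * (((j:ℝ) * ξ + 2*t*Real.cos ξ : ℝ) : ℂ))‖ ≤
      52 * (1+t) ^ (-(1/3 : ℝ) : ℝ) := by
  have htpos : (0:ℝ) < t := by linarith
  have hT : (0:ℝ) < 1 + t := by linarith
  set r : ℝ := (1+t) ^ (-(1/3 : ℝ) : ℝ) with hr
  have hrpos : 0 < r := Real.rpow_pos_of_pos hT _
  have hr1 : r ≤ 1 := Real.rpow_le_one_of_one_le_of_nonpos (by linarith) (by norm_num)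
  have hr3 : (1+t) * r^3 = 1 := by
    rw [hr, ← Real.rpow_natCast ((1+t) ^ (-(1/3 : ℝ) : ℝ)) 3, ← Real.rpow_mul hT.le]
    norm_num
    rw [Real.rpow_neg_one]
    exact mul_inv_cancel₀ (ne_of_gt hT)
  have hpi : (3:ℝ) < Real.pi := Real.pi_gt_three
  have hrlt : r < Real.pi / 2 := by linarith
  have hrcube : r^3 ≤ r := by
    nlinarith [mul_nonneg (mul_nonneg hrpos.le hrpos.le) (sub_nonneg.2 hr1),
      mul_nonneg hrpos.le (sub_nonneg.2 hr1)]
  have hsinr : r/2 ≤ Real.sin r := by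
    have hcube := Real.sin_gt_sub_cube hrpos
    linarith
  have hsinrpos : 0 < Real.sin r := Real.sin_pos_of_pos_of_lt_pi hrpos (by linarith)
  have hlb : (0:ℝ) < 2*t*Real.sin r := by positivity
  have hlb_ge : 1/(2*r^2) ≤ 2*t*Real.sin r := by
    rw [div_le_iff₀ (by positivity)]
    have e2 : (1+t)*(r/2) ≤ (2*t)*Real.sin r := by
      apply mul_le_mul (by linarith) hsinr (by linarith) (by linarith)
    calc (1:ℝ) = (1+t)*r^3 := hr3.symm
      _ = ((1+t)*(r/2))*(2*r^2) := by ring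
      _ ≤ ((2*t)*Real.sin r)*(2*r^2) := mul_le_mul_of_nonneg_right e2 (by positivity)
      _ = 2*t*Real.sin r*(2*r^2) := by ring
  have hsq : 8 / Real.sqrt (2*t*Real.sin r) ≤ 16 * r := by
    have hs1 : 1/(2*r) ≤ Real.sqrt (2*t*Real.sin r) := by
      have step : Real.sqrt (1/(2*r^2)) ≤ Real.sqrt (2*t*Real.sin r) := Real.sqrt_le_sqrt hlb_ge
      refine le_trans ?_ step
      rw [Real.le_sqrt (by positivity)]
      rw [div_pow, div_le_div_iff₀ (by positivity) (by positivity)]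
      nlinarith
      positivity
    have h0 : (0:ℝ) < 1/(2*r) := by positivity
    calc 8 / Real.sqrt (2*t*Real.sin r) ≤ 8 / (1/(2*r)) := by
          apply div_le_div_of_nonneg_left (by norm_num) h0 hs1
      _ = 16 * r := by field_simp; ring
  have hord1 : -Real.pi ≤ -(Real.pi/2 + r) := by linarith
  have hord2 : -(Real.pi/2 + r) ≤ -(Real.pi/2 - r) := by linarith
  have hord3 : -(Real.pi/2 - r) ≤ Real.pi/2 - r := by linarith
  have hord4 : Real.pi/2 - r ≤ Real.pi/2 + r := by linarith
  have hord5 : Real.pi/2 + r ≤ Real.pi := by linarith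
  set F : ℝ → ℂ := fun ξ => Complex.exp (Complex.I * (((j:ℝ) * ξ + 2*t*Real.cos ξ : ℝ) : ℂ)) with hF
  have hFc : Continuous F := by
    apply Complex.continuous_exp.comp
    apply Continuous.mul continuous_const
    exact Complex.continuous_ofReal.comp
      ((continuous_const.mul continuous_id).add (continuous_const.mul Real.continuous_cos))
  have hint : ∀ a b : ℝ, IntervalIntegrable F volume a b := fun a b => hFc.intervalIntegrable a b
  have hcospi2add : Real.cos (Real.pi/2 + r) = -Real.sin r := by
    rw [show Real.pi/2 + r = Real.pi/2 - (-r) by ring, Real.cos_pi_div_two_sub, Real.sin_neg]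
  have hcos1 : ∀ ξ ∈ Set.Icc (-Real.pi) (-(Real.pi/2 + r)), Real.cos ξ ≤ -Real.sin r := by
    intro ξ hξ
    rw [← Real.cos_neg ξ]
    have h := Real.cos_le_cos_of_nonneg_of_le_pi (by positivity : (0:ℝ) ≤ Real.pi/2 + r)
      (by linarith [hξ.1] : -ξ ≤ Real.pi) (by linarith [hξ.2])
    rw [hcospi2add] at h
    exact h
  have hcos5 : ∀ ξ ∈ Set.Icc (Real.pi/2 + r) Real.pi, Real.cos ξ ≤ -Real.sin r := by
    intro ξ hξ
    have h := Real.cos_le_cos_of_nonneg_of_le_pi (by positivity : (0:ℝ) ≤ Real.pi/2 + r)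
      (hξ.2) (hξ.1)
    rw [hcospi2add] at h
    exact h
  have hcos3 : ∀ ξ ∈ Set.Icc (-(Real.pi/2 - r)) (Real.pi/2 - r), Real.sin r ≤ Real.cos ξ := by
    intro ξ hξ
    rw [← Real.cos_abs ξ]
    have habs : |ξ| ≤ Real.pi/2 - r := abs_le.2 ⟨by linarith [hξ.1], hξ.2⟩
    have h := Real.cos_le_cos_of_nonneg_of_le_pi (abs_nonneg ξ)
      (by linarith : Real.pi/2 - r ≤ Real.pi) habs
    rw [Real.cos_pi_div_two_sub] at h
    exact h
  have hcont2 : Continuous (fun ξ : ℝ => -(2*t*Real.cos ξ)) :=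
    (continuous_const.mul Real.continuous_cos).neg
  have hP1 : ‖∫ ξ in (-Real.pi)..(-(Real.pi/2 + r)), F ξ‖ ≤ 16 * r := by
    refine le_trans (vdc2 (f' := fun ξ => (j:ℝ) - 2*t*Real.sin ξ)
      (f'' := fun ξ => -(2*t*Real.cos ξ)) hord1 hlb
      (fun ξ _ => phase_hd1 t j ξ) (fun ξ _ => phase_hd2 t j ξ)
      hcont2.continuousOn ?_) hsq
    intro ξ hξ
    have h := mul_le_mul_of_nonneg_left (hcos1 ξ hξ) (by positivity : (0:ℝ) ≤ 2*t)
    show 2*t*Real.sin r ≤ -(2*t*Real.cos ξ)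
    linarith
  have hP5 : ‖∫ ξ in (Real.pi/2 + r)..Real.pi, F ξ‖ ≤ 16 * r := by
    refine le_trans (vdc2 (f' := fun ξ => (j:ℝ) - 2*t*Real.sin ξ)
      (f'' := fun ξ => -(2*t*Real.cos ξ)) hord5 hlb
      (fun ξ _ => phase_hd1 t j ξ) (fun ξ _ => phase_hd2 t j ξ)
      hcont2.continuousOn ?_) hsq
    intro ξ hξ
    have h := mul_le_mul_of_nonneg_left (hcos5 ξ hξ) (by positivity : (0:ℝ) ≤ 2*t)
    show 2*t*Real.sin r ≤ -(2*t*Real.cos ξ)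
    linarith
  have hP3 : ‖∫ ξ in (-(Real.pi/2 - r))..(Real.pi/2 - r), F ξ‖ ≤ 16 * r := by
    refine le_trans (vdc2neg (f' := fun ξ => (j:ℝ) - 2*t*Real.sin ξ)
      (f'' := fun ξ => -(2*t*Real.cos ξ)) hord3 hlb
      (fun ξ _ => phase_hd1 t j ξ) (fun ξ _ => phase_hd2 t j ξ)
      hcont2.continuousOn ?_) hsq
    intro ξ hξ
    have h := mul_le_mul_of_nonneg_left (hcos3 ξ hξ) (by positivity : (0:ℝ) ≤ 2*t)
    show -(2*t*Real.cos ξ) ≤ -(2*t*Real.sin r)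
    linarith
  have hP2 : ‖∫ ξ in (-(Real.pi/2 + r))..(-(Real.pi/2 - r)), F ξ‖ ≤ 2 * r := by
    refine le_trans (norm_expIf_integral_le hord2) ?_
    linarith
  have hP4 : ‖∫ ξ in (Real.pi/2 - r)..(Real.pi/2 + r), F ξ‖ ≤ 2 * r := by
    refine le_trans (norm_expIf_integral_le hord4) ?_
    linarith
  rw [← intervalIntegral.integral_add_adjacent_intervals
      (hint (-Real.pi) (-(Real.pi/2 + r))) (hint (-(Real.pi/2 + r)) Real.pi),
    ← intervalIntegral.integral_add_adjacent_intervals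
      (hint (-(Real.pi/2 + r)) (-(Real.pi/2 - r))) (hint (-(Real.pi/2 - r)) Real.pi),
    ← intervalIntegral.integral_add_adjacent_intervals
      (hint (-(Real.pi/2 - r)) (Real.pi/2 - r)) (hint (Real.pi/2 - r) Real.pi),
    ← intervalIntegral.integral_add_adjacent_intervals
      (hint (Real.pi/2 - r) (Real.pi/2 + r)) (hint (Real.pi/2 + r) Real.pi)]
  calc ‖(∫ ξ in (-Real.pi)..(-(Real.pi/2 + r)), F ξ) +
        ((∫ ξ in (-(Real.pi/2 + r))..(-(Real.pi/2 - r)), F ξ) +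
        ((∫ ξ in (-(Real.pi/2 - r))..(Real.pi/2 - r), F ξ) +
        ((∫ ξ in (Real.pi/2 - r)..(Real.pi/2 + r), F ξ) +
        (∫ ξ in (Real.pi/2 + r)..Real.pi, F ξ))))‖
      ≤ 16*r + (2*r + (16*r + (2*r + 16*r))) := by
        refine le_trans (norm_add_le _ _) (add_le_add hP1 ?_)
        refine le_trans (norm_add_le _ _) (add_le_add hP2 ?_)
        refine le_trans (norm_add_le _ _) (add_le_add hP3 ?_)
        exact le_trans (norm_add_le _ _) (add_le_add hP4 hP5)
    _ = 52 * r := by ring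

lemma intervalIntegral_conj (g : ℝ → ℂ) (a b : ℝ) :
    (∫ x in a..b, (starRingEnd ℂ) (g x)) = (starRingEnd ℂ) (∫ x in a..b, g x) := by
  rw [intervalIntegral.intervalIntegral_eq_integral_uIoc,
    intervalIntegral.intervalIntegral_eq_integral_uIoc, integral_conj]
  rw [Complex.real_smul, Complex.real_smul, map_mul, Complex.conj_ofReal]

/-- The discrete Schrödinger kernel
`K t j = (1/(2π)) ∫_{-π}^{π} e^{-4 i t sin²(ξ/2)} e^{i j ξ} dξ`. -/
noncomputable def schrodingerKernel (t : ℝ) (j : ℤ) : ℂ :=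
  (1 / (2 * Real.pi)) * ∫ ξ in (-Real.pi)..Real.pi,
    Complex.exp (-4 * Complex.I * (t : ℂ) * ((Real.sin (ξ / 2) : ℂ)) ^ 2) *
      Complex.exp (Complex.I * (j : ℂ) * (ξ : ℂ))

noncomputable def schrodingerKernel' (t : ℝ) (j : ℤ) : ℂ :=
  (1 / (2 * Real.pi)) * ∫ ξ in (-Real.pi)..Real.pi,
    Complex.exp (-4 * Complex.I * (t : ℂ) * ((Real.sin (ξ / 2) : ℂ)) ^ 2) *
      Complex.exp (Complex.I * (j : ℂ) * (ξ : ℂ))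

lemma kernel_norm (t : ℝ) (j : ℤ) :
    ‖schrodingerKernel' t j‖ = (1/(2*Real.pi)) *
      ‖∫ ξ in (-Real.pi)..Real.pi,
        Complex.exp (Complex.I * (((j:ℝ) * ξ + 2*t*Real.cos ξ : ℝ) : ℂ))‖ := by
  have hint_eq : ∀ ξ : ℝ,
      Complex.exp (-4 * Complex.I * (t : ℂ) * ((Real.sin (ξ / 2) : ℂ)) ^ 2) *
        Complex.exp (Complex.I * (j : ℂ) * (ξ : ℂ))
      = Complex.exp (-2*Complex.I*(t:ℂ)) *
        Complex.exp (Complex.I * (((j:ℝ) * ξ + 2*t*Real.cos ξ : ℝ) : ℂ)) := by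
    intro ξ
    rw [← Complex.exp_add, ← Complex.exp_add]
    congr 1
    have h := Real.sin_sq_eq_half_sub (ξ/2)
    rw [show 2*(ξ/2) = ξ by ring] at h
    have h2 : ((Real.sin (ξ/2) : ℂ))^2 = 1/2 - (Real.cos ξ : ℂ)/2 := by
      rw [show ((Real.sin (ξ/2) : ℂ))^2 = ((Real.sin (ξ/2)^2 : ℝ) : ℂ) by push_cast; ring, h]
      push_cast
      ring
    rw [h2]
    push_cast
    ring
  unfold schrodingerKernel'
  rw [show (∫ ξ in (-Real.pi)..Real.pi,
      Complex.exp (-4 * Complex.I * (t : ℂ) * ((Real.sin (ξ / 2) : ℂ)) ^ 2) *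
        Complex.exp (Complex.I * (j : ℂ) * (ξ : ℂ)))
      = Complex.exp (-2*Complex.I*(t:ℂ)) * ∫ ξ in (-Real.pi)..Real.pi,
        Complex.exp (Complex.I * (((j:ℝ) * ξ + 2*t*Real.cos ξ : ℝ) : ℂ)) by
    rw [← intervalIntegral.integral_const_mul]
    exact intervalIntegral.integral_congr (fun ξ _ => hint_eq ξ)]
  rw [norm_mul, norm_mul]
  have he : ‖Complex.exp (-2*Complex.I*(t:ℂ))‖ = 1 := by
    rw [Complex.norm_exp]
    simp
  rw [he]
  have hp : ‖(1 / (2 * (Real.pi:ℂ)))‖ = 1/(2*Real.pi) := by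
    rw [norm_div, norm_one, norm_mul]
    simp [abs_of_pos Real.pi_pos]
  have : ((1:ℂ) / (2 * Real.pi)) = (1 / (2 * (Real.pi:ℂ))) := by push_cast; ring
  rw [this, hp]
  ring

lemma kernel_norm_neg (t : ℝ) (j : ℤ) :
    ‖schrodingerKernel' (-t) j‖ = ‖schrodingerKernel' t j‖ := by
  rw [kernel_norm, kernel_norm]
  congr 1
  have key : (∫ ξ in (-Real.pi)..Real.pi,
      Complex.exp (Complex.I * (((j:ℝ) * ξ + 2*(-t)*Real.cos ξ : ℝ) : ℂ)))
      = (starRingEnd ℂ) (∫ ξ in (-Real.pi)..Real.pi,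
        Complex.exp (Complex.I * (((j:ℝ) * ξ + 2*t*Real.cos ξ : ℝ) : ℂ))) := by
    rw [← intervalIntegral_conj]
    have h1 := intervalIntegral.integral_comp_neg
      (fun ξ => Complex.exp (Complex.I * (((j:ℝ) * ξ + 2*(-t)*Real.cos ξ : ℝ) : ℂ)))
      (a := -Real.pi) (b := Real.pi)
    rw [neg_neg] at h1
    rw [← h1]
    apply intervalIntegral.integral_congr
    intro ξ _
    show Complex.exp (Complex.I * (((j:ℝ) * (-ξ) + 2*(-t)*Real.cos (-ξ) : ℝ) : ℂ))
      = (starRingEnd ℂ) (Complex.exp (Complex.I * (((j:ℝ) * ξ + 2*t*Real.cos ξ : ℝ) : ℂ)))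
    rw [← Complex.exp_conj]
    congr 1
    rw [Real.cos_neg]
    simp only [map_mul, Complex.conj_I, Complex.conj_ofReal]
    push_cast
    ring
  rw [key]
  simp

lemma kernel_bound_nonneg {t : ℝ} (ht : 0 ≤ t) (j : ℤ) :
    ‖schrodingerKernel' t j‖ ≤ 9 * (1+t) ^ (-(1/3 : ℝ) : ℝ) := by
  have hpi : (3:ℝ) < Real.pi := Real.pi_gt_three
  have hT : (0:ℝ) < 1 + t := by linarith
  have hrpos : (0:ℝ) < (1+t) ^ (-(1/3 : ℝ) : ℝ) := Real.rpow_pos_of_pos hT _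
  rcases le_total t 1 with ht1 | ht1
  · -- small time: trivial bound
    have h1 : ‖schrodingerKernel' t j‖ ≤ 1 := by
      rw [kernel_norm]
      have h2 := norm_expIf_integral_le (f := fun ξ => (j:ℝ) * ξ + 2*t*Real.cos ξ)
        (by linarith : -Real.pi ≤ Real.pi)
      calc (1/(2*Real.pi)) * ‖∫ ξ in (-Real.pi)..Real.pi,
            Complex.exp (Complex.I * (((j:ℝ) * ξ + 2*t*Real.cos ξ : ℝ) : ℂ))‖
          ≤ (1/(2*Real.pi)) * (Real.pi - (-Real.pi)) := by
            apply mul_le_mul_of_nonneg_left h2 (by positivity)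
        _ = 1 := by field_simp; ring
    refine le_trans h1 ?_
    have hcube : (1+t) ^ ((1/3 : ℝ) : ℝ) ≤ 2 := by
      calc (1+t) ^ ((1/3 : ℝ) : ℝ) ≤ (2:ℝ) ^ ((1/3 : ℝ) : ℝ) :=
            Real.rpow_le_rpow (by linarith) (by linarith) (by norm_num)
        _ ≤ (2:ℝ) ^ ((1:ℝ)) := Real.rpow_le_rpow_of_exponent_le (by norm_num) (by norm_num)
        _ = 2 := Real.rpow_one 2
    have hne : (1+t) ^ (-(1/3 : ℝ) : ℝ) = ((1+t) ^ ((1/3 : ℝ) : ℝ))⁻¹ := by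
      rw [← Real.rpow_neg hT.le]
    have hcp : (0:ℝ) < (1+t) ^ ((1/3 : ℝ) : ℝ) := Real.rpow_pos_of_pos hT _
    have : (1/2 : ℝ) ≤ (1+t) ^ (-(1/3 : ℝ) : ℝ) := by
      rw [hne]
      rw [le_inv_comm₀ (by norm_num) hcp]
      linarith
    linarith
  · -- large time
    rw [kernel_norm]
    have hJ := J_bound ht1 j
    calc (1/(2*Real.pi)) * ‖∫ ξ in (-Real.pi)..Real.pi,
          Complex.exp (Complex.I * (((j:ℝ) * ξ + 2*t*Real.cos ξ : ℝ) : ℂ))‖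
        ≤ (1/(2*Real.pi)) * (52 * (1+t) ^ (-(1/3 : ℝ) : ℝ)) := by
          apply mul_le_mul_of_nonneg_left hJ (by positivity)
      _ ≤ 9 * (1+t) ^ (-(1/3 : ℝ) : ℝ) := by
          rw [div_mul_eq_mul_div, one_mul, div_le_iff₀ (by positivity)]
          nlinarith

lemma kernel_bound (t : ℝ) (j : ℤ) :
    ‖schrodingerKernel' t j‖ ≤ 9 * (1+|t|) ^ (-(1/3 : ℝ) : ℝ) := by
  rcases le_total 0 t with ht | ht
  · rw [abs_of_nonneg ht]
    exact kernel_bound_nonneg ht j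
  · rw [abs_of_nonpos ht]
    have h1 : ‖schrodingerKernel' t j‖ = ‖schrodingerKernel' (-t) j‖ := by
      rw [← kernel_norm_neg]
    rw [h1]
    exact kernel_bound_nonneg (by linarith) j

lemma kernel_bound_final (t : ℝ) (j : ℤ) :
    ‖schrodingerKernel t j‖ ≤ 9 * (1+|t|) ^ (-(1/3 : ℝ) : ℝ) :=
  kernel_bound t j

/-- Dispersive `ℓ¹ → ℓ∞` decay for the discrete Schrödinger evolution on `ℤ`. -/
theorem discrete_schrodinger_linfty_decay :
    ∃ C > 0, ∀ (t : ℝ) (φ : ℤ → ℂ), Summable (fun k : ℤ => ‖φ k‖) →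
      ∀ j : ℤ,
        ‖∑' k : ℤ, schrodingerKernel t (j - k) * φ k‖ ≤
          C * (1 + |t|) ^ (-(1 / 3 : ℝ)) * ∑' k : ℤ, ‖φ k‖ := by
  refine ⟨9, by norm_num, ?_⟩
  intro t φ hφ j
  set B : ℝ := 9 * (1+|t|) ^ (-(1/3 : ℝ) : ℝ) with hB
  have hB0 : 0 ≤ B := by positivity
  have hbound : ∀ k : ℤ, ‖schrodingerKernel t (j-k) * φ k‖ ≤ B * ‖φ k‖ := by
    intro k
    rw [norm_mul]
    exact mul_le_mul_of_nonneg_right (kernel_bound_final t (j-k)) (norm_nonneg _)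
  have hsumB : Summable (fun k : ℤ => B * ‖φ k‖) := hφ.mul_left B
  have hsum2 : Summable (fun k : ℤ => ‖schrodingerKernel t (j-k) * φ k‖) :=
    Summable.of_nonneg_of_le (fun k => norm_nonneg _) hbound hsumB
  calc ‖∑' k : ℤ, schrodingerKernel t (j - k) * φ k‖
      ≤ ∑' k : ℤ, ‖schrodingerKernel t (j - k) * φ k‖ := norm_tsum_le_tsum_norm hsum2
    _ ≤ ∑' k : ℤ, B * ‖φ k‖ := Summable.tsum_le_tsum hbound hsum2 hsumB
    _ = B * ∑' k : ℤ, ‖φ k‖ := tsum_mul_left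
    _ = 9 * (1 + |t|) ^ (-(1 / 3 : ℝ)) * ∑' k : ℤ, ‖φ k‖ := by rw [hB]
end

section
/- Let Δ_d be the bounded linear operator on ℓ²(ℤ; ℂ) defined by (Δ_d u)(j) = u(j+1) - 2u(j) + u(j-1). Then for every t ∈ ℝ, every φ ∈ ℓ¹(ℤ; ℂ) (viewed as an element of ℓ²(ℤ; ℂ)), and every j ∈ ℤ, one has (exp(itΔ_d) φ)(j) = Σ_{k∈ℤ} K_t(j-k) φ(k), where exp denotes the operator exponential of the bounded operator itΔ_d. -/
open Real MeasureTheory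

namespace DSchAux

noncomputable def symb (ξ : ℝ) : ℂ := ((-4 * (Real.sin (ξ / 2)) ^ 2 : ℝ) : ℂ)

lemma continuous_symb : Continuous symb := by unfold symb; fun_prop

lemma norm_symb_le (ξ : ℝ) : ‖symb ξ‖ ≤ 4 := by
  have h1 : Real.sin (ξ / 2) ^ 2 ≤ 1 := Real.sin_sq_le_one _
  have h0 : (0:ℝ) ≤ Real.sin (ξ / 2) ^ 2 := sq_nonneg _
  simp only [symb, Complex.norm_real, Real.norm_eq_abs]
  rw [abs_mul, abs_of_nonneg h0]
  rw [show |(-4:ℝ)| = 4 by norm_num]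
  linarith

lemma re_I_mul_symb (t ξ : ℝ) : (Complex.I * (t : ℂ) * symb ξ).re = 0 := by
  simp only [symb]
  simp only [Complex.mul_re, Complex.mul_im, Complex.I_re, Complex.I_im,
    Complex.ofReal_re, Complex.ofReal_im]
  ring

lemma symb_eq (ξ : ℝ) :
    symb ξ = Complex.exp (Complex.I * ξ) + Complex.exp (-(Complex.I * ξ)) - 2 := by
  have h1 : Complex.I * ξ = (ξ:ℂ) * Complex.I := by ring
  have h2 : -(Complex.I * ξ) = ((-ξ : ℝ):ℂ) * Complex.I := by push_cast; ring
  rw [h2, h1, Complex.exp_mul_I, Complex.exp_mul_I]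
  have hsin : Real.sin (ξ/2) ^ 2 = 1/2 - Real.cos ξ / 2 := by
    rw [Real.sin_sq_eq_half_sub]
    norm_num [mul_div_cancel₀]
  rw [symb, hsin]
  push_cast
  rw [Complex.cos_neg, Complex.sin_neg, ← Complex.ofReal_cos]
  push_cast
  ring

noncomputable def evalCLM (j : ℤ) : lp (fun _ : ℤ => ℂ) 2 →L[ℂ] ℂ :=
  LinearMap.mkContinuous
    { toFun := fun u => u j
      map_add' := fun u v => by simp [lp.coeFn_add]
      map_smul' := fun c u => by simp [lp.coeFn_smul] } 1
    (fun u => by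
      rw [one_mul]; exact lp.norm_apply_le_norm (by norm_num) u j)

@[simp] lemma evalCLM_apply (j : ℤ) (u : lp (fun _ : ℤ => ℂ) 2) : evalCLM j u = u j := rfl

lemma swap_int {ι : Type*} [Countable ι] (f : ι → ℝ → ℂ) (hf : ∀ k, Continuous (f k))
    (b : ι → ℝ) (hb0 : ∀ k, 0 ≤ b k) (hb : ∀ k ξ, ‖f k ξ‖ ≤ b k) (hsum : Summable b) :
    (∫ ξ in (-Real.pi)..Real.pi, ∑' k, f k ξ) = ∑' k, ∫ ξ in (-Real.pi)..Real.pi, f k ξ := by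
  have hle : (-Real.pi) ≤ Real.pi := by linarith [Real.pi_pos]
  have h1 : ∀ k, (∫⁻ ξ in Set.Ioc (-Real.pi) Real.pi, ‖f k ξ‖₊ ∂volume)
      ≤ ENNReal.ofReal (b k) * ENNReal.ofReal (2 * Real.pi) := by
    intro k
    have step1 : (∫⁻ ξ in Set.Ioc (-Real.pi) Real.pi, ‖f k ξ‖₊ ∂volume)
        ≤ ∫⁻ ξ in Set.Ioc (-Real.pi) Real.pi, ENNReal.ofReal (b k) ∂volume := by
      apply lintegral_mono; intro ξ
      simp only []
      rw [show (‖f k ξ‖₊ : ENNReal) = ENNReal.ofReal ‖f k ξ‖ from (ofReal_norm _).symm]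
      exact ENNReal.ofReal_le_ofReal (hb k ξ)
    refine step1.trans ?_
    rw [setLIntegral_const, Real.volume_Ioc]
    rw [show Real.pi - -Real.pi = 2 * Real.pi by ring]
  have hne : (∑' k, ∫⁻ ξ in Set.Ioc (-Real.pi) Real.pi, ‖f k ξ‖₊ ∂volume) ≠ ⊤ := by
    refine ne_top_of_le_ne_top ?_ (ENNReal.tsum_le_tsum h1)
    rw [ENNReal.tsum_mul_right, ← ENNReal.ofReal_tsum_of_nonneg hb0 hsum]
    exact ENNReal.mul_ne_top ENNReal.ofReal_ne_top ENNReal.ofReal_ne_top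
  rw [intervalIntegral.integral_of_le hle,
    MeasureTheory.integral_tsum (fun k => (hf k).aestronglyMeasurable) hne]
  exact tsum_congr fun k => (intervalIntegral.integral_of_le hle).symm

lemma norm_exp_im (z : ℂ) (hz : z.re = 0) : ‖Complex.exp z‖ = 1 := by
  rw [Complex.norm_exp, hz, Real.exp_zero]

lemma charInt (n : ℤ) :
    (∫ ξ in (-Real.pi)..Real.pi, Complex.exp (Complex.I * n * ξ))
      = if n = 0 then (2 * Real.pi : ℂ) else 0 := by
  by_cases hn : n = 0
  · subst hn
    simp only [Int.cast_zero, mul_zero, zero_mul, Complex.exp_zero, if_true]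
    rw [intervalIntegral.integral_const, Complex.real_smul]
    push_cast
    ring
  · rw [if_neg hn]
    have hc : (Complex.I * n : ℂ) ≠ 0 := by
      simp [Complex.I_ne_zero, Complex.ext_iff, hn]
    rw [integral_exp_mul_complex hc]
    have key : Complex.exp (Complex.I * ↑n * ↑Real.pi)
        = Complex.exp (Complex.I * ↑n * ↑(-Real.pi)) := by
      have harg : Complex.I * ↑n * ↑Real.pi
          = Complex.I * ↑n * ↑(-Real.pi) + n * (2 * Real.pi * Complex.I) := by
        push_cast; ring
      rw [harg, Complex.exp_add, Complex.exp_int_mul_two_pi_mul_I, mul_one]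
    rw [key, sub_self, zero_div]

noncomputable def fs (φ : ℤ → ℂ) (ξ : ℝ) : ℂ :=
  ∑' k : ℤ, φ k * Complex.exp (-(Complex.I * k * ξ))

lemma norm_char (k : ℤ) (ξ : ℝ) : ‖Complex.exp (-(Complex.I * k * ξ))‖ = 1 := by
  apply norm_exp_im; simp

lemma norm_char' (k : ℤ) (ξ : ℝ) : ‖Complex.exp (Complex.I * k * ξ)‖ = 1 := by
  apply norm_exp_im; simp

lemma fs_continuous {φ : ℤ → ℂ} (h : Summable fun k => ‖φ k‖) : Continuous (fs φ) := by
  apply continuous_tsum (u := fun k => ‖φ k‖)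
  · intro k; fun_prop
  · exact h
  · intro k ξ
    rw [norm_mul, norm_char, mul_one]

lemma fs_norm_le {φ : ℤ → ℂ} (h : Summable fun k => ‖φ k‖) (ξ : ℝ) :
    ‖fs φ ξ‖ ≤ ∑' k, ‖φ k‖ := by
  refine (norm_tsum_le_tsum_norm ?_).trans ?_
  · exact h.congr fun k => by rw [norm_mul, norm_char, mul_one]
  · exact le_of_eq (tsum_congr fun k => by rw [norm_mul, norm_char, mul_one])

lemma summable_mul_char {φ : ℤ → ℂ} (h : Summable fun k => ‖φ k‖) (g : ℤ → ℂ)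
    (hg : ∀ k, ‖g k‖ = 1) : Summable fun k => φ k * g k := by
  apply Summable.of_norm
  exact h.congr fun k => by rw [norm_mul, hg, mul_one]

lemma inversion (φ : ℤ → ℂ) (h : Summable fun k => ‖φ k‖) (j : ℤ) :
    φ j = (1 / (2 * Real.pi) : ℂ) *
      ∫ ξ in (-Real.pi)..Real.pi, fs φ ξ * Complex.exp (Complex.I * j * ξ) := by
  have key : (∫ ξ in (-Real.pi)..Real.pi, fs φ ξ * Complex.exp (Complex.I * j * ξ))
      = ∑' k : ℤ, φ k * ∫ ξ in (-Real.pi)..Real.pi, Complex.exp (Complex.I * (j - k) * ξ) := by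
    have e1 : ∀ ξ : ℝ, fs φ ξ * Complex.exp (Complex.I * j * ξ)
        = ∑' k : ℤ, φ k * Complex.exp (Complex.I * (j - k) * ξ) := by
      intro ξ
      rw [fs, ← tsum_mul_right]
      refine tsum_congr fun k => ?_
      rw [mul_assoc, ← Complex.exp_add]
      congr 2
      push_cast
      ring
    rw [intervalIntegral.integral_congr (g := fun ξ =>
      ∑' k : ℤ, φ k * Complex.exp (Complex.I * (j - k) * ξ)) (fun ξ _ => e1 ξ)]
    rw [swap_int (fun k ξ => φ k * Complex.exp (Complex.I * (j - k) * ξ))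
      (fun k => by fun_prop) (fun k => ‖φ k‖) (fun k => norm_nonneg _)
      (fun k ξ => by rw [norm_mul, norm_exp_im _ (by simp), mul_one]) h]
    exact tsum_congr fun k => intervalIntegral.integral_const_mul _ _
  rw [key]
  have e2 : ∀ k : ℤ, φ k * (∫ ξ in (-Real.pi)..Real.pi, Complex.exp (Complex.I * (j - k) * ξ))
      = if k = j then φ j * (2 * Real.pi : ℂ) else 0 := by
    intro k
    rw [show ((j:ℂ) - (k:ℂ)) = ((j - k : ℤ) : ℂ) by push_cast; ring, charInt (j - k)]
    by_cases hk : k = j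
    · subst hk; simp
    · rw [if_neg (fun hh => hk (by omega)), if_neg hk, mul_zero]
  rw [tsum_congr e2, tsum_ite_eq]
  have hπ : (2 * Real.pi : ℂ) ≠ 0 := by
    simp [Complex.ext_iff, Real.pi_ne_zero]
  field_simp

lemma summable_shift (φ : ℤ → ℂ) (h : Summable fun k => ‖φ k‖) (m : ℤ) :
    Summable fun k => ‖φ (k + m)‖ := by
  have := ((Equiv.addRight m).summable_iff (f := fun k => ‖φ k‖)).mpr h
  exact this

lemma tsum_shift (f : ℤ → ℂ) (hf : Summable f) (m : ℤ) :
    ∑' k : ℤ, f (k + m) = ∑' k : ℤ, f k := by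
  have := (Equiv.addRight m).tsum_eq f
  simpa using this

variable (Δd : lp (fun _ : ℤ => ℂ) 2 →L[ℂ] lp (fun _ : ℤ => ℂ) 2)
  (hΔd : ∀ (u : lp (fun _ : ℤ => ℂ) 2) (j : ℤ),
      (Δd u : ℤ → ℂ) j = u (j + 1) - 2 * u j + u (j - 1))

include hΔd

lemma delta_l1 {φ : lp (fun _ : ℤ => ℂ) 2} (h : Summable fun k => ‖(φ : ℤ → ℂ) k‖) :
    Summable fun k => ‖(Δd φ : ℤ → ℂ) k‖ := by
  have hs : Summable fun k : ℤ =>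
      ‖(φ : ℤ → ℂ) (k + 1)‖ + 2 * ‖(φ : ℤ → ℂ) k‖ + ‖(φ : ℤ → ℂ) (k + (-1))‖ :=
    ((summable_shift _ h 1).add (h.mul_left 2)).add (summable_shift _ h (-1))
  refine Summable.of_nonneg_of_le (fun k => norm_nonneg _) (fun k => ?_) hs
  rw [hΔd, show k + (-1 : ℤ) = k - 1 by ring]
  refine (norm_add_le _ _).trans ?_
  have h2 : ‖(φ : ℤ → ℂ) (k + 1) - 2 * (φ : ℤ → ℂ) k‖
      ≤ ‖(φ : ℤ → ℂ) (k + 1)‖ + 2 * ‖(φ : ℤ → ℂ) k‖ := by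
    refine (norm_sub_le _ _).trans ?_
    rw [norm_mul]
    norm_num
  linarith

lemma fs_delta {φ : lp (fun _ : ℤ => ℂ) 2} (h : Summable fun k => ‖(φ : ℤ → ℂ) k‖) (ξ : ℝ) :
    fs (Δd φ : ℤ → ℂ) ξ = symb ξ * fs (φ : ℤ → ℂ) ξ := by
  set ψ : ℤ → ℂ := (φ : ℤ → ℂ) with hψ
  have hchar : ∀ k : ℤ, ‖Complex.exp (-(Complex.I * k * ξ))‖ = 1 := fun k => norm_char k ξ
  have S1 : Summable fun j : ℤ => ψ (j + 1) * Complex.exp (-(Complex.I * j * ξ)) := by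
    apply Summable.of_norm
    exact (summable_shift ψ h 1).congr fun j => by rw [norm_mul, hchar, mul_one]
  have S2 : Summable fun j : ℤ => (2 : ℂ) * (ψ j * Complex.exp (-(Complex.I * j * ξ))) :=
    (summable_mul_char h _ hchar).mul_left 2
  have S3 : Summable fun j : ℤ => ψ (j - 1) * Complex.exp (-(Complex.I * j * ξ)) := by
    apply Summable.of_norm
    refine (summable_shift ψ h (-1)).congr fun j => ?_
    rw [norm_mul, hchar, mul_one, show j + (-1 : ℤ) = j - 1 by ring]
  have e1 : fs (Δd φ : ℤ → ℂ) ξ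
      = ∑' j : ℤ, (ψ (j + 1) * Complex.exp (-(Complex.I * j * ξ))
          - (2 : ℂ) * (ψ j * Complex.exp (-(Complex.I * j * ξ)))
          + ψ (j - 1) * Complex.exp (-(Complex.I * j * ξ))) := by
    refine tsum_congr fun j => ?_
    rw [hΔd]
    ring
  rw [e1, Summable.tsum_add (S1.sub S2) S3, Summable.tsum_sub S1 S2]
  have T1 : (∑' j : ℤ, ψ (j + 1) * Complex.exp (-(Complex.I * j * ξ)))
      = Complex.exp (Complex.I * ξ) * fs ψ ξ := by
    have := tsum_shift (fun m : ℤ => ψ m * Complex.exp (-(Complex.I * ((m : ℂ) - 1) * ξ)))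
      (by
        apply Summable.of_norm
        refine h.congr fun m => ?_
        rw [norm_mul, norm_exp_im _ (by simp), mul_one]) 1
    have l1 : (∑' j : ℤ, ψ (j + 1) * Complex.exp (-(Complex.I * j * ξ)))
        = ∑' m : ℤ, ψ m * Complex.exp (-(Complex.I * ((m : ℂ) - 1) * ξ)) := by
      rw [← this]
      refine tsum_congr fun j => ?_
      push_cast
      ring_nf
    rw [l1, fs, ← tsum_mul_left]
    refine tsum_congr fun m => ?_
    rw [mul_left_comm, ← Complex.exp_add]
    congr 1
    ring
  have T3 : (∑' j : ℤ, ψ (j - 1) * Complex.exp (-(Complex.I * j * ξ)))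
      = Complex.exp (-(Complex.I * ξ)) * fs ψ ξ := by
    have := tsum_shift (fun m : ℤ => ψ m * Complex.exp (-(Complex.I * ((m : ℂ) + 1) * ξ)))
      (by
        apply Summable.of_norm
        refine h.congr fun m => ?_
        rw [norm_mul, norm_exp_im _ (by simp), mul_one]) (-1)
    have l1 : (∑' j : ℤ, ψ (j - 1) * Complex.exp (-(Complex.I * j * ξ)))
        = ∑' m : ℤ, ψ m * Complex.exp (-(Complex.I * ((m : ℂ) + 1) * ξ)) := by
      rw [← this]
      refine tsum_congr fun j => ?_
      push_cast
      ring_nf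
    rw [l1, fs, ← tsum_mul_left]
    refine tsum_congr fun m => ?_
    rw [mul_left_comm, ← Complex.exp_add]
    congr 1
    ring
  have T2 : (∑' j : ℤ, (2 : ℂ) * (ψ j * Complex.exp (-(Complex.I * j * ξ))))
      = 2 * fs ψ ξ := by rw [fs, ← tsum_mul_left]
  rw [T1, T2, T3, symb_eq]
  ring

lemma iterated (φ : lp (fun _ : ℤ => ℂ) 2) (h : Summable fun k => ‖(φ : ℤ → ℂ) k‖) (n : ℕ) :
    (Summable fun k => ‖((Δd ^ n) φ : ℤ → ℂ) k‖) ∧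
      ∀ ξ : ℝ, fs ((Δd ^ n) φ : ℤ → ℂ) ξ = symb ξ ^ n * fs (φ : ℤ → ℂ) ξ := by
  induction n with
  | zero =>
    refine ⟨by simpa using h, fun ξ => by simp⟩
  | succ n ih =>
    have hpow : (Δd ^ (n + 1)) φ = Δd ((Δd ^ n) φ) := by
      rw [pow_succ']; rfl
    refine ⟨by rw [hpow]; exact delta_l1 Δd hΔd ih.1, fun ξ => ?_⟩
    rw [hpow, fs_delta Δd hΔd ih.1 ξ, ih.2 ξ, pow_succ']
    ring

omit Δd hΔd in
lemma exp_apply (A : lp (fun _ : ℤ => ℂ) 2 →L[ℂ] lp (fun _ : ℤ => ℂ) 2)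
    (φ : lp (fun _ : ℤ => ℂ) 2) (j : ℤ) :
    ((NormedSpace.exp A) φ : ℤ → ℂ) j
      = ∑' (n : ℕ), ((Nat.factorial n : ℂ))⁻¹ * (((A ^ n) φ : ℤ → ℂ) j) := by
  have hS : Summable fun n : ℕ => ((Nat.factorial n : ℂ))⁻¹ • A ^ n := NormedSpace.expSeries_summable' A
  have h1 : HasSum (fun n : ℕ => ((Nat.factorial n : ℂ))⁻¹ • A ^ n) (NormedSpace.exp A) := by
    rw [NormedSpace.exp_eq_tsum ℂ]
    exact hS.hasSum
  have h2 := h1.mapL (ContinuousLinearMap.apply ℂ (lp (fun _ : ℤ => ℂ) 2) φ)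
  have h3 := h2.mapL (evalCLM j)
  refine (h3.tsum_eq.symm).trans ?_
  refine tsum_congr fun n => ?_
  simp only [ContinuousLinearMap.apply_apply, evalCLM_apply, ContinuousLinearMap.smul_apply]
  rw [lp.coeFn_smul, Pi.smul_apply, smul_eq_mul]
end DSchAux

/-- If `Δ_d` is the bounded operator on `ℓ²(ℤ; ℂ)` given by
`(Δ_d u)(j) = u(j+1) - 2u(j) + u(j-1)`, then the Schrödinger group `exp(itΔ_d)` acts on
`ℓ¹`-data by convolution with the discrete Schrödinger kernel. -/
theorem discrete_schrodinger_semigroup_eq_kernel_convolution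
    (Δd : lp (fun _ : ℤ => ℂ) 2 →L[ℂ] lp (fun _ : ℤ => ℂ) 2)
    (hΔd : ∀ (u : lp (fun _ : ℤ => ℂ) 2) (j : ℤ),
      (Δd u : ℤ → ℂ) j = u (j + 1) - 2 * u j + u (j - 1)) :
    ∀ (t : ℝ) (φ : lp (fun _ : ℤ => ℂ) 2), Summable (fun k : ℤ => ‖(φ : ℤ → ℂ) k‖) →
      ∀ j : ℤ,
        ((NormedSpace.exp ((Complex.I * (t : ℂ)) • Δd)) φ : ℤ → ℂ) j =
          ∑' k : ℤ, schrodingerKernel t (j - k) * (φ : ℤ → ℂ) k := by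
  intro t φ hφ j
  open DSchAux in
  set ψ : ℤ → ℂ := (φ : ℤ → ℂ) with hψ
  set C : ℝ := ∑' k : ℤ, ‖ψ k‖ with hC
  have hC0 : 0 ≤ C := tsum_nonneg fun k => norm_nonneg _
  -- Step 1: pointwise power series for the operator exponential
  have h1 : ((NormedSpace.exp ((Complex.I * (t : ℂ)) • Δd)) φ : ℤ → ℂ) j
      = ∑' (n : ℕ), ((Nat.factorial n : ℂ))⁻¹ *
          ((Complex.I * t) ^ n * (((Δd ^ n) φ : ℤ → ℂ) j)) := by
    rw [DSchAux.exp_apply]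
    refine tsum_congr fun n => ?_
    rw [smul_pow, ContinuousLinearMap.smul_apply, lp.coeFn_smul, Pi.smul_apply, smul_eq_mul]
  have hiter := DSchAux.iterated Δd hΔd φ hφ
  -- Step 2: Fourier representation of `Δ^n φ`
  have h2 : ∀ n : ℕ, (((Δd ^ n) φ : ℤ → ℂ) j)
      = (1 / (2 * Real.pi) : ℂ) * ∫ ξ in (-Real.pi)..Real.pi,
          DSchAux.symb ξ ^ n * DSchAux.fs ψ ξ * Complex.exp (Complex.I * j * ξ) := by
    intro n
    rw [DSchAux.inversion ((Δd ^ n) φ : ℤ → ℂ) (hiter n).1 j]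
    congr 1
    refine intervalIntegral.integral_congr fun ξ _ => ?_
    rw [(hiter n).2 ξ]
  have h3 : ∀ n : ℕ, ((Nat.factorial n : ℂ))⁻¹ *
        ((Complex.I * t) ^ n * (((Δd ^ n) φ : ℤ → ℂ) j))
      = (1 / (2 * Real.pi) : ℂ) * ∫ ξ in (-Real.pi)..Real.pi,
          ((Nat.factorial n : ℂ))⁻¹ * (Complex.I * t * DSchAux.symb ξ) ^ n
            * DSchAux.fs ψ ξ * Complex.exp (Complex.I * j * ξ) := by
    intro n
    rw [h2 n, show ((Nat.factorial n : ℂ))⁻¹ * ((Complex.I * t) ^ n *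
        ((1 / (2 * Real.pi) : ℂ) * ∫ ξ in (-Real.pi)..Real.pi,
          DSchAux.symb ξ ^ n * DSchAux.fs ψ ξ * Complex.exp (Complex.I * j * ξ)))
      = (1 / (2 * Real.pi) : ℂ) * (((Nat.factorial n : ℂ))⁻¹ * (Complex.I * t) ^ n *
          ∫ ξ in (-Real.pi)..Real.pi,
            DSchAux.symb ξ ^ n * DSchAux.fs ψ ξ * Complex.exp (Complex.I * j * ξ)) by ring]
    congr 1
    rw [← intervalIntegral.integral_const_mul]
    refine intervalIntegral.integral_congr fun ξ _ => ?_
    rw [mul_pow]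
    ring
  -- the summand functions over ℕ
  set F : ℕ → ℝ → ℂ := fun n ξ =>
    ((Nat.factorial n : ℂ))⁻¹ * (Complex.I * t * DSchAux.symb ξ) ^ n
      * DSchAux.fs ψ ξ * Complex.exp (Complex.I * j * ξ) with hF
  have hFcont : ∀ n, Continuous (F n) := by
    intro n
    apply Continuous.mul
    apply Continuous.mul
    · exact continuous_const.mul ((continuous_const.mul DSchAux.continuous_symb).pow n)
    · exact DSchAux.fs_continuous hφ
    · fun_prop
  have hFb : ∀ (n : ℕ) (ξ : ℝ), ‖F n ξ‖ ≤ (4 * |t|) ^ n / (Nat.factorial n) * C := by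
    intro n ξ
    have hz : ‖Complex.I * t * DSchAux.symb ξ‖ ≤ 4 * |t| := by
      rw [norm_mul, norm_mul, Complex.norm_I, one_mul, Complex.norm_real, Real.norm_eq_abs]
      calc |t| * ‖DSchAux.symb ξ‖ ≤ |t| * 4 := by
            gcongr
            exact DSchAux.norm_symb_le ξ
        _ = 4 * |t| := by ring
    have hfs : ‖DSchAux.fs ψ ξ‖ ≤ C := DSchAux.fs_norm_le hφ ξ
    rw [hF]
    simp only []
    rw [norm_mul, norm_mul, norm_mul, norm_pow, norm_inv,
      DSchAux.norm_exp_im _ (by simp), mul_one]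
    have hnf : ‖((Nat.factorial n : ℂ))‖ = (Nat.factorial n : ℝ) := by
      rw [Complex.norm_natCast]
    rw [hnf]
    have hp1 : ‖Complex.I * ↑t * DSchAux.symb ξ‖ ^ n ≤ (4 * |t|) ^ n :=
      pow_le_pow_left₀ (norm_nonneg _) hz n
    have hp2 : (0:ℝ) ≤ ((Nat.factorial n : ℝ))⁻¹ := by positivity
    calc ((Nat.factorial n : ℝ))⁻¹ * ‖Complex.I * ↑t * DSchAux.symb ξ‖ ^ n * ‖DSchAux.fs ψ ξ‖
        ≤ ((Nat.factorial n : ℝ))⁻¹ * (4 * |t|) ^ n * C := by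
          apply mul_le_mul _ hfs (norm_nonneg _) (by positivity)
          exact mul_le_mul_of_nonneg_left hp1 hp2
      _ = (4 * |t|) ^ n / (Nat.factorial n : ℝ) * C := by ring
  have hFsum : Summable fun n : ℕ => (4 * |t|) ^ n / (Nat.factorial n) * C :=
    (Real.summable_pow_div_factorial (4 * |t|)).mul_right C
  have hFb0 : ∀ n : ℕ, 0 ≤ (4 * |t|) ^ n / (Nat.factorial n) * C := by
    intro n; positivity
  -- sum over n under the integral
  have hswapN : (∑' n : ℕ, ∫ ξ in (-Real.pi)..Real.pi, F n ξ)
      = ∫ ξ in (-Real.pi)..Real.pi, ∑' n : ℕ, F n ξ :=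
    (DSchAux.swap_int F hFcont _ hFb0 hFb hFsum).symm
  -- identify the inner sum with the exponential
  have hsum_n : ∀ ξ : ℝ, (∑' n : ℕ, F n ξ)
      = Complex.exp (Complex.I * t * DSchAux.symb ξ) *
          (DSchAux.fs ψ ξ * Complex.exp (Complex.I * j * ξ)) := by
    intro ξ
    have hexp : Complex.exp (Complex.I * t * DSchAux.symb ξ)
        = ∑' n : ℕ, ((Nat.factorial n : ℂ))⁻¹ * (Complex.I * t * DSchAux.symb ξ) ^ n := by
      rw [Complex.exp_eq_exp_ℂ, NormedSpace.exp_eq_tsum ℂ]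
      exact tsum_congr fun n => by rw [smul_eq_mul]
    rw [hexp, ← tsum_mul_right]
    exact tsum_congr fun n => by rw [hF]; ring
  -- expand `fs`
  have hexpand : ∀ ξ : ℝ, Complex.exp (Complex.I * t * DSchAux.symb ξ) *
        (DSchAux.fs ψ ξ * Complex.exp (Complex.I * j * ξ))
      = ∑' k : ℤ, ψ k * (Complex.exp (Complex.I * t * DSchAux.symb ξ) *
          Complex.exp (-(Complex.I * k * ξ)) * Complex.exp (Complex.I * j * ξ)) := by
    intro ξ
    rw [DSchAux.fs, ← tsum_mul_right, ← tsum_mul_left]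
    exact tsum_congr fun k => by ring
  -- swap the k-sum with the integral
  have hswapK : (∫ ξ in (-Real.pi)..Real.pi, ∑' k : ℤ, ψ k *
        (Complex.exp (Complex.I * t * DSchAux.symb ξ) *
          Complex.exp (-(Complex.I * k * ξ)) * Complex.exp (Complex.I * j * ξ)))
      = ∑' k : ℤ, ∫ ξ in (-Real.pi)..Real.pi, ψ k *
        (Complex.exp (Complex.I * t * DSchAux.symb ξ) *
          Complex.exp (-(Complex.I * k * ξ)) * Complex.exp (Complex.I * j * ξ)) := by
    refine DSchAux.swap_int _ (fun k => by
        apply Continuous.mul continuous_const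
        exact ((Complex.continuous_exp.comp
          (continuous_const.mul DSchAux.continuous_symb)).mul (by fun_prop)).mul (by fun_prop))
      (fun k => ‖ψ k‖) (fun k => norm_nonneg _) (fun k ξ => ?_) hφ
    rw [norm_mul, norm_mul, norm_mul,
      DSchAux.norm_exp_im _ (DSchAux.re_I_mul_symb t ξ),
      DSchAux.norm_exp_im _ (by simp), DSchAux.norm_exp_im _ (by simp)]
    norm_num
  -- put everything together
  rw [h1, tsum_congr h3, tsum_mul_left]
  rw [show (∑' n : ℕ, ∫ ξ in (-Real.pi)..Real.pi,
      ((Nat.factorial n : ℂ))⁻¹ * (Complex.I * t * DSchAux.symb ξ) ^ n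
        * DSchAux.fs ψ ξ * Complex.exp (Complex.I * j * ξ))
    = ∑' n : ℕ, ∫ ξ in (-Real.pi)..Real.pi, F n ξ from rfl]
  rw [hswapN, intervalIntegral.integral_congr (fun ξ _ => hsum_n ξ),
    intervalIntegral.integral_congr (fun ξ _ => hexpand ξ), hswapK, ← tsum_mul_left]
  refine tsum_congr fun k => ?_
  rw [intervalIntegral.integral_const_mul]
  rw [schrodingerKernel]
  have hker : (∫ ξ in (-Real.pi)..Real.pi, Complex.exp (Complex.I * t * DSchAux.symb ξ) *
        Complex.exp (-(Complex.I * k * ξ)) * Complex.exp (Complex.I * j * ξ))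
      = ∫ ξ in (-Real.pi)..Real.pi,
          Complex.exp (-4 * Complex.I * t * ((Real.sin (ξ / 2) : ℝ) : ℂ) ^ 2) *
            Complex.exp (Complex.I * ((j - k : ℤ) : ℂ) * ξ) := by
    refine intervalIntegral.integral_congr fun ξ _ => ?_
    rw [mul_assoc, ← Complex.exp_add]
    congr 1
    · rw [DSchAux.symb]
      push_cast
      ring
    · congr 1
      push_cast
      ring
  rw [hker]
  ring
end
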